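/- Let $R$ be a commutative ring of characteristic $p$ (a prime) and let $x \in R$ with $x^p = 0$. Define $E(x) = \sum_{i=0}^{p-1} x^i/i!$ and, for $u$ with $(u-1)^p = 0$, define $L(u) = \sum_{j=1}^{p-1} (-1)^{j+1}(u-1)^j/j$. Then $(E(x)-1)^p = 0$ and $L(E(x)) = x$. -/

import Mathlib

/-- The truncated exponential `E(x) = ∑_{i=0}^{p-1} x^i / i!` in a commutative ring of
characteristic `p`, where the inverse factorials are taken in `ℤ/p` and mapped into `R`. -/
noncomputable def truncExp (p : ℕ) {R : Type*} [CommRing R] [CharP R p] (x : R) : R :=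
  ∑ i ∈ Finset.range p, ZMod.castHom (dvd_refl p) R ((i.factorial : ZMod p)⁻¹) * x ^ i

/-- The truncated logarithm `L(u) = ∑_{j=1}^{p-1} (-1)^(j+1) (u-1)^j / j` in a commutative
ring of characteristic `p`, the inverses `1/j` being taken in `ℤ/p` and mapped into `R`. -/
noncomputable def truncLog (p : ℕ) {R : Type*} [CommRing R] [CharP R p] (u : R) : R :=
  ∑ j ∈ Finset.Icc 1 (p - 1),
    (-1 : R) ^ (j + 1) * ZMod.castHom (dvd_refl p) R ((j : ZMod p)⁻¹) * (u - 1) ^ j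

open Polynomial Finset

section Aux

variable (p : ℕ) [Fact p.Prime]

/-- Truncated exponential polynomial over `ZMod p`. -/
noncomputable def truncExpPoly : Polynomial (ZMod p) :=
  ∑ i ∈ Finset.range p, C ((i.factorial : ZMod p)⁻¹) * X ^ i

/-- Truncated log of the truncated exponential, as a polynomial over `ZMod p`. -/
noncomputable def truncLogExpPoly : Polynomial (ZMod p) :=
  ∑ j ∈ Finset.Icc 1 (p - 1),
    C ((-1 : ZMod p) ^ (j + 1) * (j : ZMod p)⁻¹) * (truncExpPoly p - 1) ^ j

lemma coeff_truncExpPoly_zero : (truncExpPoly p).coeff 0 = 1 := by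
  have hp : 0 < p := (Fact.out : p.Prime).pos
  simp [truncExpPoly, Polynomial.finset_sum_coeff, Polynomial.coeff_C_mul,
    Polynomial.coeff_X_pow, Finset.sum_ite_eq, hp]

lemma X_dvd_truncExpPoly_sub_one : X ∣ truncExpPoly p - 1 := by
  rw [Polynomial.X_dvd_iff]
  simp [coeff_truncExpPoly_zero]

lemma natCast_zmod_ne_zero {n : ℕ} (h0 : 0 < n) (h : n < p) : (n : ZMod p) ≠ 0 := by
  rw [Ne, ZMod.natCast_eq_zero_iff]
  exact fun hd => absurd (Nat.le_of_dvd h0 hd) (not_le.mpr h)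

lemma factorial_zmod_ne_zero {n : ℕ} (h : n < p) : ((n.factorial : ZMod p)) ≠ 0 := by
  rw [Ne, ZMod.natCast_eq_zero_iff]
  intro hd
  exact absurd ((Nat.Prime.dvd_factorial Fact.out).mp hd) (not_le.mpr h)

lemma derivative_truncExpPoly :
    derivative (truncExpPoly p) =
      truncExpPoly p - C (((p - 1).factorial : ZMod p)⁻¹) * X ^ (p - 1) := by
  have hp : 0 < p := (Fact.out : p.Prime).pos
  have hsplit : truncExpPoly p =
      (∑ i ∈ Finset.range (p - 1), C ((i.factorial : ZMod p)⁻¹) * X ^ i) +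
        C (((p - 1).factorial : ZMod p)⁻¹) * X ^ (p - 1) := by
    rw [truncExpPoly, ← Finset.sum_range_succ, Nat.sub_add_cancel hp]
  have key : derivative (truncExpPoly p) =
      ∑ i ∈ Finset.range (p - 1), C ((i.factorial : ZMod p)⁻¹) * X ^ i := by
    rw [truncExpPoly, derivative_sum]
    have hterm : ∀ i : ℕ, derivative (C ((i.factorial : ZMod p)⁻¹) * X ^ i) =
        C ((i.factorial : ZMod p)⁻¹ * (i : ZMod p)) * X ^ (i - 1) := by
      intro i
      rw [derivative_C_mul, derivative_X_pow, C_mul]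
      ring
    simp only [hterm]
    rw [show Finset.range p = Finset.range ((p - 1) + 1) from by
      rw [Nat.sub_add_cancel hp], Finset.sum_range_succ']
    simp only [Nat.cast_zero, mul_zero, map_zero, zero_mul, add_zero]
    refine Finset.sum_congr rfl fun i hi => ?_
    rw [Finset.mem_range] at hi
    have hlt : i + 1 < p := by omega
    have hfac : (((i + 1).factorial : ℕ) : ZMod p) =
        ((i + 1 : ℕ) : ZMod p) * ((i.factorial : ℕ) : ZMod p) := by
      rw [Nat.factorial_succ]; push_cast; ring
    have h1 : ((i + 1 : ℕ) : ZMod p) ≠ 0 := natCast_zmod_ne_zero p (Nat.succ_pos i) hlt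
    have h2 : ((i.factorial : ℕ) : ZMod p) ≠ 0 := factorial_zmod_ne_zero p (by omega)
    have : ((i + 1).factorial : ZMod p)⁻¹ * ((i + 1 : ℕ) : ZMod p) =
        ((i.factorial : ZMod p))⁻¹ := by
      rw [hfac, mul_inv, mul_comm, ← mul_assoc]
      field_simp
    simp only [Nat.add_sub_cancel]
    rw [show (((i+1) : ℕ) : ZMod p) = ((i : ZMod p) + 1) by push_cast; ring] at this h1 ⊢
    rw [this]
  rw [key, hsplit]
  ring

/-- Geometric-sum factor appearing in the derivative of the truncated log. -/
noncomputable def geomG : Polynomial (ZMod p) :=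
  ∑ k ∈ Finset.range (p - 1), (-(truncExpPoly p - 1)) ^ k

lemma derivative_truncLogExpPoly :
    derivative (truncLogExpPoly p) = geomG p * derivative (truncExpPoly p) := by
  have hp : 0 < p := (Fact.out : p.Prime).pos
  rw [truncLogExpPoly, derivative_sum]
  have hterm : ∀ j ∈ Finset.Icc 1 (p - 1),
      derivative (C ((-1 : ZMod p) ^ (j + 1) * (j : ZMod p)⁻¹) * (truncExpPoly p - 1) ^ j) =
        (C ((-1 : ZMod p) ^ (j + 1)) * (truncExpPoly p - 1) ^ (j - 1)) *
          derivative (truncExpPoly p) := by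
    intro j hj
    rw [Finset.mem_Icc] at hj
    have hj0 : (j : ZMod p) ≠ 0 := natCast_zmod_ne_zero p (by omega) (by omega)
    rw [derivative_C_mul, derivative_pow]
    have hder : derivative (truncExpPoly p - 1) = derivative (truncExpPoly p) := by
      rw [derivative_sub, derivative_one, sub_zero]
    rw [hder]
    have hC : C ((-1 : ZMod p) ^ (j + 1) * (j : ZMod p)⁻¹) * C ((j : ℕ) : ZMod p) =
        C ((-1 : ZMod p) ^ (j + 1)) := by
      rw [← C_mul, mul_assoc, inv_mul_cancel₀ hj0, mul_one]
    linear_combination ((truncExpPoly p - 1) ^ (j - 1) * derivative (truncExpPoly p)) * hC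
  rw [Finset.sum_congr rfl hterm, ← Finset.sum_mul]
  congr 1
  have hp1 : p - 1 + 1 = p := Nat.sub_add_cancel hp
  rw [geomG, show Finset.Icc 1 (p - 1) = Finset.Ico 1 p from by
    rw [← Finset.Ico_add_one_right_eq_Icc, hp1], Finset.sum_Ico_eq_sum_range]
  refine Finset.sum_congr rfl fun k _ => ?_
  have h1 : 1 + k - 1 = k := by omega
  have h2 : (-1 : ZMod p) ^ (1 + k + 1) = (-1) ^ k := by
    rw [show 1 + k + 1 = k + 2 from by omega, pow_add]
    ring
  rw [h1, h2, map_pow, map_neg, map_one, ← neg_pow]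

lemma truncExpPoly_mul_geomG :
    truncExpPoly p * geomG p = 1 - (-(truncExpPoly p - 1)) ^ (p - 1) := by
  have h := geom_sum_mul (-(truncExpPoly p - 1)) (p - 1)
  rw [geomG]
  linear_combination -h

lemma X_pow_dvd_derivative_sub_one :
    X ^ (p - 1) ∣ derivative (truncLogExpPoly p) - 1 := by
  rw [derivative_truncLogExpPoly, derivative_truncExpPoly]
  have h1 : X ^ (p - 1) ∣ (-(truncExpPoly p - 1)) ^ (p - 1) :=
    pow_dvd_pow_of_dvd ((dvd_neg).mpr (X_dvd_truncExpPoly_sub_one p)) _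
  have h2 : X ^ (p - 1) ∣ geomG p * (C (((p - 1).factorial : ZMod p)⁻¹) * X ^ (p - 1)) :=
    dvd_mul_of_dvd_right (dvd_mul_left _ _) _
  have key : geomG p * (truncExpPoly p - C (((p - 1).factorial : ZMod p)⁻¹) * X ^ (p - 1)) - 1 =
      -((-(truncExpPoly p - 1)) ^ (p - 1)) -
        geomG p * (C (((p - 1).factorial : ZMod p)⁻¹) * X ^ (p - 1)) := by
    have h := truncExpPoly_mul_geomG p
    linear_combination h
  rw [key]
  exact dvd_sub (dvd_neg.mpr h1) h2

lemma X_pow_dvd_truncLogExpPoly_sub_X :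
    X ^ p ∣ truncLogExpPoly p - X := by
  have hp : 0 < p := (Fact.out : p.Prime).pos
  rw [Polynomial.X_pow_dvd_iff]
  intro d hd
  match d with
  | 0 =>
    have hF : X ∣ truncLogExpPoly p - X := by
      refine dvd_sub (Finset.dvd_sum fun j hj => ?_) dvd_rfl
      rw [Finset.mem_Icc] at hj
      exact dvd_mul_of_dvd_right
        (dvd_pow (X_dvd_truncExpPoly_sub_one p) (by omega)) _
    rw [← Polynomial.X_dvd_iff]
    exact hF
  | (n + 1) =>
    have hn : n < p - 1 := by omega
    have h0 : (derivative (truncLogExpPoly p) - 1).coeff n = 0 := by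
      exact (Polynomial.X_pow_dvd_iff.mp (X_pow_dvd_derivative_sub_one p)) n hn
    have hco : (truncLogExpPoly p - X).coeff (n + 1) * ((n : ZMod p) + 1) = 0 := by
      have := Polynomial.coeff_derivative (truncLogExpPoly p - X) n
      rw [derivative_sub, derivative_X] at this
      rw [← this, h0]
    have hne : ((n : ZMod p) + 1) ≠ 0 := by
      have := natCast_zmod_ne_zero p (Nat.succ_pos n) (by omega : n + 1 < p)
      push_cast at this
      exact this
    exact (mul_eq_zero.mp hco).resolve_right hne

end Aux

theorem truncLog_truncExp {p : ℕ} (hp : p.Prime) {R : Type*} [CommRing R] [CharP R p]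
    (x : R) (hx : x ^ p = 0) :
    (truncExp p x - 1) ^ p = 0 ∧ truncLog p (truncExp p x) = x := by
  haveI : Fact p.Prime := ⟨hp⟩
  set f : ZMod p →+* R := ZMod.castHom (dvd_refl p) R with hf
  have hE : Polynomial.eval₂ f x (truncExpPoly p) = truncExp p x := by
    rw [truncExpPoly, truncExp, Polynomial.eval₂_finset_sum]
    refine Finset.sum_congr rfl fun i _ => ?_
    rw [eval₂_mul, eval₂_C, eval₂_X_pow]
  have hL : Polynomial.eval₂ f x (truncLogExpPoly p) = truncLog p (truncExp p x) := by
    rw [truncLogExpPoly, truncLog, Polynomial.eval₂_finset_sum]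
    refine Finset.sum_congr rfl fun j _ => ?_
    rw [eval₂_mul, eval₂_C, eval₂_pow, eval₂_sub, eval₂_one, hE,
      map_mul, map_pow, map_neg, map_one]
  constructor
  · obtain ⟨q, hq⟩ := pow_dvd_pow_of_dvd (X_dvd_truncExpPoly_sub_one p) p
    have h1 : truncExp p x - 1 = Polynomial.eval₂ f x (truncExpPoly p - 1) := by
      rw [eval₂_sub, eval₂_one, hE]
    rw [h1, ← eval₂_pow, hq, eval₂_mul, eval₂_X_pow, hx, zero_mul]
  · obtain ⟨q, hq⟩ := X_pow_dvd_truncLogExpPoly_sub_X p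
    have h2 := congrArg (Polynomial.eval₂ f x) hq
    rw [eval₂_sub, eval₂_X, eval₂_mul, eval₂_X_pow, hx, zero_mul, hL, sub_eq_zero] at h2
    exact h2
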